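/- Let (M,q) be a metric group and let L1, L2, L3 be Lagrangian subgroups of M. Suppose x1, x1' ∈ L1 and x2, x2' ∈ L2 satisfy x1 + x2 = x1' + x2' and x1 + x2 ∈ L3, and suppose y1, y1' ∈ L1 and y2, y2' ∈ L2 satisfy y1 + y2 = y1' + y2' and y1 + y2 ∈ L3. Then b_q(x1, y2) = b_q(x1', y2'). (That is, the bicharacter c(x,y) := b_q(x1,y2) on (L1+L2) ∩ L3 is well defined, independently of the chosen decompositions x = x1 + x2, y = y1 + y2 with xi, yi ∈ Li.) -/
import Mathlib


/-- The symmetric bicharacter associated to a quadratic form `q` with values in `ℂˣ`. -/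
def bq {M : Type*} [AddCommGroup M] (q : M → ℂˣ) (x y : M) : ℂˣ :=
  q (x + y) * (q x)⁻¹ * (q y)⁻¹

/-- `(M, q)` is a metric group: `q` is even, `b_q` is biadditive and nondegenerate. -/
def IsMetric {M : Type*} [AddCommGroup M] (q : M → ℂˣ) : Prop :=
  (∀ x, q (-x) = q x) ∧
  (∀ x y z, bq q (x + y) z = bq q x z * bq q y z) ∧
  (∀ x y z, bq q x (y + z) = bq q x y * bq q x z) ∧
  (∀ x, (∀ y, bq q x y = 1) → x = 0)

/-- A subgroup `L` is Lagrangian for `q` if `q = 1` on `L` and `|L|² = |M|`. -/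
def IsLagrangian {M : Type*} [AddCommGroup M] (q : M → ℂˣ) (L : AddSubgroup M) : Prop :=
  (∀ x ∈ L, q x = 1) ∧ Nat.card L ^ 2 = Nat.card M

/-- The bicharacter `c(x,y) = b_q(x1,y2)` on `(L1 + L2) ∩ L3` is well defined,
independently of the decompositions `x = x1 + x2`, `y = y1 + y2` with `xi, yi ∈ Li`. -/
lemma bq_isotropic {M : Type*} [AddCommGroup M] (q : M → ℂˣ) (L : AddSubgroup M)
    (hL : ∀ x ∈ L, q x = 1) {a b : M} (ha : a ∈ L) (hb : b ∈ L) :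
    bq q a b = 1 := by
  unfold bq
  rw [hL _ (add_mem ha hb), hL a ha, hL b hb]
  simp

theorem stmt2 {M : Type*} [AddCommGroup M] [Fintype M] (q : M → ℂˣ)
    (hq : IsMetric q) (L1 L2 L3 : AddSubgroup M)
    (h1 : IsLagrangian q L1) (h2 : IsLagrangian q L2) (h3 : IsLagrangian q L3)
    (x1 x1' x2 x2' y1 y1' y2 y2' : M)
    (hx1 : x1 ∈ L1) (hx1' : x1' ∈ L1) (hx2 : x2 ∈ L2) (hx2' : x2' ∈ L2)
    (hxeq : x1 + x2 = x1' + x2') (hx3 : x1 + x2 ∈ L3)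
    (hy1 : y1 ∈ L1) (hy1' : y1' ∈ L1) (hy2 : y2 ∈ L2) (hy2' : y2' ∈ L2)
    (hyeq : y1 + y2 = y1' + y2') (hy3 : y1 + y2 ∈ L3) :
    bq q x1 y2 = bq q x1' y2' := by
  obtain ⟨hq0, haddl, haddr, hnd⟩ := hq
  have hd1 : x1 - x1' ∈ L1 := sub_mem hx1 hx1'
  have hd2 : x1 - x1' ∈ L2 := by
    have : x1 - x1' = x2' - x2 := by
      rw [sub_eq_sub_iff_add_eq_add, hxeq]; abel
    rw [this]; exact sub_mem hx2' hx2
  have he2 : y2 - y2' ∈ L2 := sub_mem hy2 hy2'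
  have he1 : y2 - y2' ∈ L1 := by
    have : y2 - y2' = y1' - y1 := by rw [sub_eq_sub_iff_add_eq_add, add_comm y2 y1, hyeq]
    rw [this]; exact sub_mem hy1' hy1
  have key : bq q x1 y2 = bq q (x1' + (x1 - x1')) (y2' + (y2 - y2')) := by
    congr 1 <;> abel
  rw [key, haddl, haddr, haddr,
    bq_isotropic q L1 h1.1 hx1' he1,
    bq_isotropic q L2 h2.1 hd2 hy2',
    bq_isotropic q L1 h1.1 hd1 he1]
  simp
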